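/- arXiv:1201.2553 — 4 statements merged into one kernel-verified Lean document; each statement's English description precedes it below -/
import Mathlib

section
/- Let α, β, γ be types and let f : α → List Bool → β → γ → List Bool → γ and h : α → List Bool → β → γ → γ satisfy: (i) f x [] b c d = c for all x, b, c, d, and (ii) f x (a ++ [i]) b c d = h x (d ++ List.replicate a.length false) b (f x a b c d) for all x, a, b, c, d and both digits i : Bool. Then for all x, u, t, b, c, w: f x u b (f x t b c w) (w ++ List.replicate t.length false) = f x (t ++ List.replicate u.length false) b c w. -/
theorem oplus_lemma {α β γ : Type*} (f : α → List Bool → β → γ → List Bool → γ)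
    (h : α → List Bool → β → γ → γ)
    (hbase : ∀ x b c d, f x [] b c d = c)
    (hstep : ∀ x (a : List Bool) b c d (i : Bool),
      f x (a ++ [i]) b c d = h x (d ++ List.replicate a.length false) b (f x a b c d)) :
    ∀ x (u t : List Bool) b c (w : List Bool),
      f x u b (f x t b c w) (w ++ List.replicate t.length false)
        = f x (t ++ List.replicate u.length false) b c w := by
  intro x u
  induction u using List.reverseRecOn with
  | nil => intro t b c w; simp [hbase]
  | append_singleton u i ih =>
    intro t b c w
    rw [hstep, ih]
    have : t ++ List.replicate (u ++ [i]).length false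
        = (t ++ List.replicate u.length false) ++ [false] := by
      simp [List.replicate_succ']
    rw [this, hstep]
    have h2 : (w ++ List.replicate t.length false) ++ List.replicate u.length false
        = w ++ List.replicate (t ++ List.replicate u.length false).length false := by
      rw [List.append_assoc, ← List.replicate_add, List.length_append, List.length_replicate]
    rw [h2]
end

section
/- Let α, β, γ be types and let f : α → List Bool → β → γ → List Bool → γ and h : α → List Bool → β → γ → γ satisfy: (i) f x [] b c d = c for all x, b, c, d, and (ii) f x (a ++ [i]) b c d = h x (d ++ List.replicate a.length false) b (f x a b c d) for all x, a, b, c, d and both digits i : Bool. Fix x : α, b : β and m, n : ℕ. Suppose Fq, Fr : List Bool → γ → List Bool → γ satisfy, for all a, c, d: Fq a c d = f x (minW a (List.replicate m false)) b c d and Fr a c d = f x (minW a (List.replicate n false)) b c d. Then for all a, c, d: Fq (List.take (a.length - n) a) (Fr a c d) (d ++ List.replicate n false) = f x (minW a (List.replicate (m + n) false)) b c d, where subtraction of lengths is truncated subtraction on ℕ and minW u v = u if u.length < v.length and minW u v = v otherwise. -/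
def minW (u v : List Bool) : List Bool := if u.length < v.length then u else v

theorem truncation_addition_case {α β γ : Type*}
    (f : α → List Bool → β → γ → List Bool → γ)
    (h : α → List Bool → β → γ → γ)
    (hbase : ∀ x b c d, f x [] b c d = c)
    (hstep : ∀ x (a : List Bool) b c d (i : Bool),
      f x (a ++ [i]) b c d = h x (d ++ List.replicate a.length false) b (f x a b c d))
    (x : α) (b : β) (m n : ℕ)
    (Fq Fr : List Bool → γ → List Bool → γ)
    (hFq : ∀ (a : List Bool) (c : γ) (d : List Bool),
      Fq a c d = f x (minW a (List.replicate m false)) b c d)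
    (hFr : ∀ (a : List Bool) (c : γ) (d : List Bool),
      Fr a c d = f x (minW a (List.replicate n false)) b c d) :
    ∀ (a : List Bool) (c : γ) (d : List Bool),
      Fq (List.take (a.length - n) a) (Fr a c d) (d ++ List.replicate n false)
        = f x (minW a (List.replicate (m + n) false)) b c d := by
  have repl : ∀ (a : List Bool) c d,
      f x a b c d = f x (List.replicate a.length false) b c d := by
    intro a
    induction a using List.reverseRecOn with
    | nil => intro c d; rfl
    | append_singleton a i ih =>
      intro c d
      rw [hstep, ih]
      have h1 : List.replicate (a ++ [i]).length false
          = List.replicate a.length false ++ [false] := by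
        simp [List.replicate_succ']
      rw [h1, hstep]
      simp
  have add : ∀ k j c (d : List Bool),
      f x (List.replicate k false) b (f x (List.replicate j false) b c d)
        (d ++ List.replicate j false) = f x (List.replicate (k + j) false) b c d := by
    intro k
    induction k with
    | zero => intro j c d; simp [hbase]
    | succ k ih =>
      intro j c d
      have h1 : List.replicate (k + 1) false = List.replicate k false ++ [false] := by
        simp [List.replicate_succ']
      have h2 : List.replicate (k + 1 + j) false
          = List.replicate (k + j) false ++ [false] := by
        rw [show k + 1 + j = (k + j) + 1 by omega]
        simp [List.replicate_succ']
      rw [h1, hstep, ih, h2, hstep]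
      congr 1
      simp [List.append_assoc, ← List.replicate_add, Nat.add_comm]
  have lmin : ∀ u v : List Bool, (minW u v).length = min u.length v.length := by
    intro u v
    simp only [minW]
    split <;> omega
  intro a c d
  rw [hFq, hFr]
  by_cases hL : a.length < n
  · have ht : List.take (a.length - n) a = [] := by
      simp [Nat.sub_eq_zero_of_le hL.le]
    rw [ht]
    have e0 : minW [] (List.replicate m false) = [] := by
      rcases Nat.eq_zero_or_pos m with hm | hm
      · simp [minW, hm]
      · simp [minW, hm]
    rw [e0, hbase]
    have e1 : minW a (List.replicate n false) = a := by
      simp [minW, hL]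
    have e2 : minW a (List.replicate (m + n) false) = a := by
      simp only [minW, List.length_replicate]
      rw [if_pos (by omega)]
    rw [e1, e2]
  · push_neg at hL
    rw [repl (minW _ _), repl (minW a (List.replicate n false)),
      repl (minW a (List.replicate (m + n) false))]
    simp only [lmin, List.length_take, List.length_replicate]
    rw [Nat.min_eq_right hL]
    have e3 : min a.length (m + n) = min (min (a.length - n) a.length) m + n := by
      omega
    rw [e3]
    exact add _ _ _ _
end

section
/- Let α, β, γ be types and let f : α → List Bool → β → γ → List Bool → γ and h : α → List Bool → β → γ → γ satisfy: (i) f x [] b c d = c for all x, b, c, d, and (ii) f x (a ++ [i]) b c d = h x (d ++ List.replicate a.length false) b (f x a b c d) for all x, a, b, c, d and both digits i : Bool. Fix x : α, b : β and m : ℕ, and suppose F : List Bool → γ → List Bool → γ satisfies, for all a, c, d: F a c d = f x (minW a (List.replicate m false)) b c d. Suppose G : List Bool → List Bool → γ → List Bool → γ satisfies: G [] a c d = c, and for both digits i, G (z ++ [i]) a c d = F (List.take (a.length - z.length * m) a) (G z a c d) (d ++ List.replicate (z.length * m) false). Then for all z, a, c, d: G z a c d = f x (minW a (List.replicate (z.length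 * m) false)) b c d, where subtraction is truncated subtraction on ℕ and minW u v = u if u.length < v.length and minW u v = v otherwise. -/
theorem truncation_multiplication_claim {α β γ : Type*}
    (f : α → List Bool → β → γ → List Bool → γ)
    (h : α → List Bool → β → γ → γ)
    (hbase : ∀ x b c d, f x [] b c d = c)
    (hstep : ∀ x (a : List Bool) b c d (i : Bool),
      f x (a ++ [i]) b c d = h x (d ++ List.replicate a.length false) b (f x a b c d))
    (x : α) (b : β) (m : ℕ)
    (F : List Bool → γ → List Bool → γ)
    (hF : ∀ (a : List Bool) (c : γ) (d : List Bool),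
      F a c d = f x (minW a (List.replicate m false)) b c d)
    (G : List Bool → List Bool → γ → List Bool → γ)
    (hG0 : ∀ (a : List Bool) (c : γ) (d : List Bool), G [] a c d = c)
    (hGS : ∀ (z : List Bool) (a : List Bool) (c : γ) (d : List Bool) (i : Bool),
      G (z ++ [i]) a c d
        = F (List.take (a.length - z.length * m) a) (G z a c d)
            (d ++ List.replicate (z.length * m) false)) :
    ∀ (z a : List Bool) (c : γ) (d : List Bool),
      G z a c d = f x (minW a (List.replicate (z.length * m) false)) b c d := by
  -- f depends on its word argument only through its length
  have flen : ∀ (w : List Bool) (c : γ) (d : List Bool),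
      f x w b c d = f x (List.replicate w.length false) b c d := by
    intro w
    induction w using List.reverseRecOn with
    | nil => intro c d; simp
    | append_singleton w i ih =>
      intro c d
      rw [hstep, ih]
      have hrep : List.replicate (w ++ [i]).length false
          = List.replicate w.length false ++ [false] := by
        simp [List.replicate_succ']
      rw [hrep, hstep]
      simp
  have hlen : ∀ (u : List Bool) (n : ℕ),
      (minW u (List.replicate n false)).length = min u.length n := by
    intro u n; unfold minW; split <;> simp_all <;> omega
  have comp : ∀ (q p : ℕ) (c : γ) (d : List Bool),
      f x (List.replicate q false) b (f x (List.replicate p false) b c d)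
        (d ++ List.replicate p false) = f x (List.replicate (p + q) false) b c d := by
    intro q
    induction q with
    | zero => intro p c d; simp [hbase]
    | succ q ih =>
      intro p c d
      rw [List.replicate_succ', hstep, ih]
      have : p + (q + 1) = (p + q) + 1 := rfl
      rw [this, List.replicate_succ', hstep]
      congr 1
      rw [List.length_replicate, List.length_replicate, List.replicate_add, List.append_assoc]
  have key : ∀ (a : List Bool) (k : ℕ) (c : γ) (d : List Bool),
      f x (minW (List.take (a.length - k) a) (List.replicate m false)) b
        (f x (minW a (List.replicate k false)) b c d) (d ++ List.replicate k false)
      = f x (minW a (List.replicate (k + m) false)) b c d := by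
    intro a k c d
    rw [flen (minW (List.take _ _) _), flen (minW a (List.replicate k false)),
      flen (minW a (List.replicate (k + m) false)), hlen, hlen, hlen, List.length_take]
    by_cases hc : a.length ≤ k
    · have h1 : min (min (a.length - k) a.length) m = 0 := by omega
      have h2 : min a.length k = min a.length (k + m) := by omega
      rw [h1, h2]
      simp [hbase]
    · have h1 : min a.length k = k := by omega
      rw [h1, comp]
      have h2 : k + min (min (a.length - k) a.length) m = min a.length (k + m) := by omega
      rw [h2]
  intro z
  induction z using List.reverseRecOn with
  | nil =>
    intro a c d
    rw [hG0]
    simp [minW, hbase]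
  | append_singleton z i ih =>
    intro a c d
    have hmul : (z ++ [i]).length * m = z.length * m + m := by
      simp [Nat.succ_mul]
    rw [hGS, hF, ih, hmul, key]
end

section
/- Let α, β, γ be types and let f : α → List Bool → β → γ → List Bool → γ and h : α → List Bool → β → γ → γ satisfy: (i) f x [] b c d = c for all x, b, c, d, and (ii) f x (a ++ [i]) b c d = h x (d ++ List.replicate a.length false) b (f x a b c d) for all x, a, b, c, d and both digits i : Bool. Then for every n : ℕ and every word a with n ≤ a.length, and all x, b, c, d: f x (List.take (a.length - n) a) b (f x (List.replicate n false) b c d) (d ++ List.replicate n false) = f x a b c d. -/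
theorem split_recursion_argument {α β γ : Type*}
    (f : α → List Bool → β → γ → List Bool → γ)
    (h : α → List Bool → β → γ → γ)
    (hbase : ∀ x b c d, f x [] b c d = c)
    (hstep : ∀ x (a : List Bool) b c d (i : Bool),
      f x (a ++ [i]) b c d = h x (d ++ List.replicate a.length false) b (f x a b c d)) :
    ∀ (n : ℕ) (a : List Bool), n ≤ a.length →
      ∀ x b c (d : List Bool),
        f x (List.take (a.length - n) a) b (f x (List.replicate n false) b c d)
          (d ++ List.replicate n false) = f x a b c d := by
  have hlen : ∀ (n : ℕ) (a a' : List Bool), a.length = n → a'.length = n →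
      ∀ x b c d, f x a b c d = f x a' b c d := by
    intro n
    induction n with
    | zero =>
      intro a a' ha ha'
      rw [List.length_eq_zero_iff] at ha ha'
      subst ha; subst ha'
      intro _ _ _ _; rfl
    | succ n ih =>
      intro a a' ha ha' x b c d
      rcases a.eq_nil_or_concat with rfl | ⟨u, i, rfl⟩
      · simp at ha
      rcases a'.eq_nil_or_concat with rfl | ⟨u', i', rfl⟩
      · simp at ha'
      simp at ha ha'
      simp only [List.concat_eq_append]
      rw [hstep, hstep, ha, ha', ih u u' ha ha' x b c d]
  have hsplit : ∀ (v w : List Bool) (x : α) (b : β) (c : γ) (d : List Bool),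
      f x v b (f x w b c d) (d ++ List.replicate w.length false) = f x (w ++ v) b c d := by
    intro v
    induction v using List.reverseRecOn with
    | nil => intro w x b c d; simp [hbase]
    | append_singleton v i ih =>
      intro w x b c d
      rw [hstep, ih, ← List.append_assoc, hstep]
      congr 1
      rw [List.append_assoc, ← List.replicate_add, List.length_append]
  intro n a hn x b c d
  have h1 := hsplit (List.take (a.length - n) a) (List.replicate n false) x b c d
  simp only [List.length_replicate] at h1
  rw [h1]
  apply hlen a.length
  · simp
    omega
  · rfl
end
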